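/- Define the twisted product α⋆β = αβ₊ if D₁ or D₋₁ separates α⁻¹(O) and β(O), and α⋆β = αβ₋ otherwise. Then ‖α⋆β‖ is within Δ⋆ = 12L + 758δ + 12ε ≤ 20L of ‖α‖ + ‖β‖, i.e., |‖α⋆β‖ − (‖α‖ + ‖β‖)| ≤ Δ⋆. -/

import Mathlib

open Metric Set
open scoped Classical

/-- Four-point condition for δ-hyperbolicity. -/
def FourPointHyp (X : Type*) [MetricSpace X] (δ : ℝ) : Prop :=
  ∀ x y z w : X,
    dist x y + dist z w ≤ max (dist x z + dist y w) (dist y z + dist x w) + 2 * δ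

/-- `s` is a geodesic segment from `a` to `b`. -/
def IsGeodSegment {X : Type*} [MetricSpace X] (a b : X) (s : Set X) : Prop :=
  ∃ f : ℝ → X, f 0 = a ∧ f (dist a b) = b ∧
    (∀ u ∈ Icc (0:ℝ) (dist a b), ∀ v ∈ Icc (0:ℝ) (dist a b),
      dist (f u) (f v) = |u - v|) ∧
    s = f '' Icc (0:ℝ) (dist a b)

/-- `X` is a geodesic space. -/
def IsGeodesicSpace (X : Type*) [MetricSpace X] : Prop :=
  ∀ a b : X, ∃ s : Set X, IsGeodSegment a b s

/-- `τ : ℝ → X` is a geodesic line. -/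
def IsGeodLine {X : Type*} [MetricSpace X] (τ : ℝ → X) : Prop :=
  ∀ u v : ℝ, dist (τ u) (τ v) = |u - v|

/-- The action of `G` on `X` is by isometries. -/
def IsomAction (G X : Type*) [Group G] [MetricSpace X] [MulAction G X] : Prop :=
  ∀ (γ : G) (x y : X), dist (γ • x) (γ • y) = dist x y

/-- A group element `ξ` is hyperbolic: `n ↦ ξⁿ(x)` is a quasi-isometric embedding
of `ℤ` into `X`. -/
def IsHypElem {G : Type*} (X : Type*) [Group G] [MetricSpace X] [MulAction G X]
    (ξ : G) : Prop :=
  ∃ x : X, ∃ A : ℝ, 0 < A ∧ ∃ B : ℝ, ∀ m n : ℤ,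
    A * |(m : ℝ) - (n : ℝ)| - B ≤ dist ((ξ ^ m) • x) ((ξ ^ n) • x)

/-- An axis of `ξ`: a geodesic line whose image is at finite Hausdorff distance
from its `ξ`-image (equivalently, joining the two fixed points of `ξ` at
infinity). -/
def IsAxisAct {G X : Type*} [Group G] [MetricSpace X] [MulAction G X]
    (ξ : G) (τ : ℝ → X) : Prop :=
  IsGeodLine τ ∧ ∃ C : ℝ,
    (∀ t : ℝ, infDist (ξ • τ t) (range τ) ≤ C) ∧
    (∀ t : ℝ, infDist (τ t) (range fun s => ξ • τ s) ≤ C)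

/-- The orbit points `x₁ = O`, `xᵢ = ξ^{i-1}(O)` for `i > 0`, `xᵢ = ξ^{i}(O)` for
`i < 0`. -/
noncomputable def orbitPt {G X : Type*} [Group G] [MetricSpace X] [MulAction G X]
    (ξ : G) (O : X) (i : ℤ) : X :=
  if 0 < i then (ξ ^ (i - 1)) • O else (ξ ^ i) • O

/-- The Voronoi cell `Dᵢ` of the orbit point `xᵢ`. -/
noncomputable def vorCell {G X : Type*} [Group G] [MetricSpace X] [MulAction G X]
    (ξ : G) (O : X) (i : ℤ) : Set X :=
  {y : X | ∀ j : ℤ, j ≠ 0 → dist y (orbitPt ξ O i) ≤ dist y (orbitPt ξ O j)}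

/-- `jx y` is the smallest index `j ∈ ℤ*` with `y ∈ D_j`. -/
def IsIndexFun {G X : Type*} [Group G] [MetricSpace X] [MulAction G X]
    (ξ : G) (O : X) (jx : X → ℤ) : Prop :=
  ∀ y : X, jx y ≠ 0 ∧ y ∈ vorCell ξ O (jx y) ∧
    ∀ k : ℤ, k ≠ 0 → y ∈ vorCell ξ O k → jx y ≤ k

/-- The symmetric element `β₋ = ξ^{−2j−1}β` if `j = j(β) > 0`, and
`β₋ = ξ^{−2j+1}β` if `j < 0`. -/
noncomputable def symmElem {G X : Type*} [Group G] [MetricSpace X] [MulAction G X]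
    (ξ : G) (O : X) (jx : X → ℤ) (β : G) : G :=
  if 0 < jx (β • O) then ξ ^ (-2 * jx (β • O) - 1) * β
  else ξ ^ (-2 * jx (β • O) + 1) * β

/-- `D₁` or `D₋₁` separates points with indices `i` and `j`. -/
def Sep1 (i j : ℤ) : Prop :=
  (min i j < 1 ∧ 1 < max i j) ∨ (min i j < -1 ∧ -1 < max i j)

/-- The twisted product: `α⋆β = αβ₊` if `D₁` or `D₋₁` separates `α⁻¹(O)` and
`β(O)`, and `α⋆β = αβ₋` otherwise. -/
noncomputable def twProd {G X : Type*} [Group G] [MetricSpace X] [MulAction G X]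
    (ξ : G) (O : X) (jx : X → ℤ) (α β : G) : G :=
  if Sep1 (jx (α⁻¹ • O)) (jx (β • O)) then α * β else α * symmElem ξ O jx β

section FS
set_option linter.unusedSectionVars false

variable {G X : Type*} [Group G] [MetricSpace X] [MulAction G X]

/-- Gromov product of `x` and `y` at basepoint `w`. -/
noncomputable def FSgp (w x y : X) : ℝ := (dist w x + dist w y - dist x y) / 2

lemma FSgp_nonneg (w x y : X) : 0 ≤ FSgp w x y := by
  have h := dist_triangle x w y
  have c : dist x w = dist w x := dist_comm _ _
  unfold FSgp; linarith

lemma FSgp_symm (w x y : X) : FSgp w x y = FSgp w y x := by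
  unfold FSgp; rw [dist_comm x y]; ring

lemma FSgp_dist (w x y : X) : dist x y = dist w x + dist w y - 2 * FSgp w x y := by
  unfold FSgp; ring

lemma FSgp_min {δ : ℝ} (hyp : FourPointHyp X δ) (w x y z : X) :
    min (FSgp w x z) (FSgp w z y) - δ ≤ FSgp w x y := by
  have h := hyp x y z w
  have c1 : dist z w = dist w z := dist_comm _ _
  have c2 : dist y w = dist w y := dist_comm _ _
  have c3 : dist x w = dist w x := dist_comm _ _
  have c4 : dist z y = dist y z := dist_comm _ _
  rcases le_total (dist y z + dist x w) (dist x z + dist y w) with hm | hm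
  · rw [max_eq_left hm] at h
    have hmin := min_le_left (FSgp w x z) (FSgp w z y)
    unfold FSgp at *; linarith
  · rw [max_eq_right hm] at h
    have hmin := min_le_right (FSgp w x z) (FSgp w z y)
    unfold FSgp at *; linarith

lemma FSgp_smul (hiso : IsomAction G X) (γ : G) (w x y : X) :
    FSgp (γ • w) (γ • x) (γ • y) = FSgp w x y := by
  unfold FSgp; rw [hiso, hiso, hiso]

/-- Bundle of standing hypotheses. -/
structure FSCtx (G X : Type*) [Group G] [MetricSpace X] [MulAction G X]
    (δ ε L : ℝ) (ξ : G) (O : X) : Prop where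
  hδ : 0 < δ
  hε : 0 < ε
  hεδ : ε < δ
  hyp : FourPointHyp X δ
  hgeo : IsGeodesicSpace X
  hiso : IsomAction G X
  hdisp : ∀ x : X, L ≤ dist x (ξ • x)
  hL300 : 300 * δ ≤ L
  hO : dist O (ξ • O) ≤ L + ε

/-- The orbit parametrized by exponents. -/
noncomputable def FSorb (ξ : G) (O : X) (a : ℤ) : X := (ξ ^ a) • O

variable {δ ε L : ℝ} {ξ : G} {O : X}

lemma FSorb_zero : FSorb ξ O 0 = O := by simp [FSorb]

lemma FSsmul_orb (k a : ℤ) : ξ ^ k • FSorb ξ O a = FSorb ξ O (k + a) := by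
  unfold FSorb; rw [smul_smul, ← zpow_add]

lemma FSorb_shift (c : FSCtx G X δ ε L ξ O) (a b k : ℤ) :
    dist (FSorb ξ O (a + k)) (FSorb ξ O (b + k)) = dist (FSorb ξ O a) (FSorb ξ O b) := by
  have h := c.hiso (ξ ^ k) (FSorb ξ O a) (FSorb ξ O b)
  rwa [FSsmul_orb, FSsmul_orb, add_comm k a, add_comm k b] at h

lemma FSorb_consec (c : FSCtx G X δ ε L ξ O) (a : ℤ) :
    dist (FSorb ξ O a) (FSorb ξ O (a + 1)) = dist O (ξ • O) := by
  have h := c.hiso (ξ ^ a) O (ξ • O)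
  have h1 : ξ ^ a • O = FSorb ξ O a := rfl
  have h2 : ξ ^ a • ξ • O = FSorb ξ O (a + 1) := by
    rw [smul_smul, show (ξ:G) ^ a * ξ = ξ ^ (a+1) by rw [zpow_add, zpow_one]]; rfl
  rwa [h1, h2] at h

lemma FSorb_dist_smul (c : FSCtx G X δ ε L ξ O) (k : ℤ) (w : X) (a : ℤ) :
    dist (ξ ^ k • w) (FSorb ξ O a) = dist w (FSorb ξ O (a - k)) := by
  have h := c.hiso (ξ ^ k) w (FSorb ξ O (a - k))
  rwa [FSsmul_orb, add_sub_cancel] at h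

end FS
section FS2
set_option linter.unusedSectionVars false
variable {G X : Type*} [Group G] [MetricSpace X] [MulAction G X]
variable {δ ε L : ℝ} {ξ : G} {O : X}

lemma FSgp_two (c : FSCtx G X δ ε L ξ O) :
    FSgp (ξ • O) O ((ξ ^ (2:ℤ)) • O) ≤ 2 * δ + ε / 2 := by
  obtain ⟨seg, f, hf0, hfD, hfiso, -⟩ := c.hgeo O (ξ • O)
  set D := dist O (ξ • O) with hDdef
  set σ := FSgp (ξ • O) O ((ξ ^ (2:ℤ)) • O) with hσdef
  set t := min (D / 2) σ with htdef
  have hσ0 : 0 ≤ σ := FSgp_nonneg _ _ _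
  have hDL : L ≤ D := c.hdisp O
  have hDU : D ≤ L + ε := c.hO
  have hD0 : 0 ≤ D := dist_nonneg
  have ht0 : 0 ≤ t := le_min (by linarith) hσ0
  have htD2 : t ≤ D / 2 := min_le_left _ _
  have htσ : t ≤ σ := min_le_right _ _
  have htD : t ≤ D := by linarith
  have h0mem : (0:ℝ) ∈ Icc (0:ℝ) D := ⟨le_refl _, hD0⟩
  have htmem : t ∈ Icc (0:ℝ) D := ⟨ht0, htD⟩
  have hDmem : D ∈ Icc (0:ℝ) D := ⟨hD0, le_refl _⟩
  set P := f t with hPdef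
  have hOP : dist O P = t := by
    have h := hfiso 0 h0mem t htmem
    rw [hf0] at h
    rw [h, zero_sub, abs_neg, abs_of_nonneg ht0]
  have hPX : dist P (ξ • O) = D - t := by
    have h := hfiso t htmem D hDmem
    rw [hfD] at h
    rw [h, abs_of_nonpos (by linarith), neg_sub]
  set Q := ξ • P with hQdef
  have h2s : (ξ ^ (2:ℤ)) • O = ξ • ξ • O := by
    rw [show ((2:ℤ)) = 1 + 1 by norm_num, zpow_add, zpow_one, mul_smul]
  have hXQ : dist (ξ • O) Q = t := by
    have h := c.hiso ξ O P
    rw [hOP] at h; exact h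
  have hQ2 : dist Q ((ξ ^ (2:ℤ)) • O) = D - t := by
    have h := c.hiso ξ P (ξ • O)
    rw [hPX] at h
    rw [h2s, dist_comm]
    rw [dist_comm] at h; exact h
  have hw2 : dist (ξ • O) ((ξ ^ (2:ℤ)) • O) = D := by
    rw [h2s]; exact c.hiso ξ O (ξ • O)
  have gPO : FSgp (ξ • O) P O = D - t := by
    unfold FSgp
    rw [dist_comm (ξ • O) P, hPX, dist_comm (ξ • O) O, dist_comm P O, hOP]
    ring
  have gQ2 : FSgp (ξ • O) ((ξ ^ (2:ℤ)) • O) Q = t := by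
    unfold FSgp
    rw [hw2, hXQ, dist_comm ((ξ ^ (2:ℤ)) • O) Q, hQ2]
    ring
  have h1 := FSgp_min c.hyp (ξ • O) P ((ξ ^ (2:ℤ)) • O) O
  have h2 := FSgp_min c.hyp (ξ • O) P Q ((ξ ^ (2:ℤ)) • O)
  -- lower bound on gp w P Q
  have hmin1 : t - δ ≤ FSgp (ξ • O) P ((ξ ^ (2:ℤ)) • O) := by
    have e1 : t - δ ≤ FSgp (ξ • O) P O - δ := by rw [gPO]; linarith
    have e2 : t ≤ σ := htσ
    have := le_min (show t ≤ FSgp (ξ • O) P O by rw [gPO]; linarith)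
      (show t ≤ FSgp (ξ • O) O ((ξ ^ (2:ℤ)) • O) from htσ)
    linarith
  have hmin2 : t - 2 * δ ≤ FSgp (ξ • O) P Q := by
    have := le_min hmin1 (show t - δ ≤ FSgp (ξ • O) ((ξ ^ (2:ℤ)) • O) Q by
      rw [gQ2]; linarith [c.hδ])
    linarith
  have hdistPQ : dist P Q = dist (ξ • O) P + dist (ξ • O) Q - 2 * FSgp (ξ • O) P Q :=
    FSgp_dist _ _ _
  have hLPQ : L ≤ dist P Q := c.hdisp P
  have hδ := c.hδ; have hε := c.hε; have hεδ := c.hεδ; have hL300 := c.hL300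
  by_contra hcon
  push_neg at hcon
  have htval : 2 * δ + ε / 2 < t := lt_min (by linarith) hcon
  have : dist (ξ • O) P = D - t := by rw [dist_comm]; exact hPX
  linarith

lemma FSgp_consec (c : FSCtx G X δ ε L ξ O) (k : ℤ) :
    FSgp (FSorb ξ O k) (FSorb ξ O (k - 1)) (FSorb ξ O (k + 1)) ≤ 2 * δ + ε / 2 := by
  have h := FSgp_two c
  have e1 : ξ ^ (k - 1) • (ξ • O) = FSorb ξ O k := by
    have h1 := FSsmul_orb (ξ := ξ) (O := O) (k - 1) 1
    rw [show k - 1 + 1 = k by ring] at h1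
    rw [← h1]
    congr 1
    unfold FSorb; rw [zpow_one]
  have e2 : ξ ^ (k - 1) • O = FSorb ξ O (k - 1) := by
    have h1 := FSsmul_orb (ξ := ξ) (O := O) (k - 1) 0
    rw [add_zero] at h1
    rw [← h1, FSorb_zero]
  have e3 : ξ ^ (k - 1) • ((ξ ^ (2:ℤ)) • O) = FSorb ξ O (k + 1) := by
    have : (ξ ^ (2:ℤ)) • O = FSorb ξ O 2 := rfl
    rw [this, FSsmul_orb, show k - 1 + 2 = k + 1 by ring]
  rw [← e1, ← e2, ← e3, FSgp_smul c.hiso]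
  exact h

end FS2
section FS3
set_option linter.unusedSectionVars false
variable {G X : Type*} [Group G] [MetricSpace X] [MulAction G X]
variable {δ ε L : ℝ} {ξ : G} {O : X}

lemma FSchain_step1 (c : FSCtx G X δ ε L ξ O) (u : ℤ → X) (D' : ℝ)
    (hcons : ∀ k : ℤ, dist (u k) (u (k + 1)) = D')
    (hDl : L ≤ D')
    (hρ : ∀ k : ℤ, FSgp (u k) (u (k - 1)) (u (k + 1)) ≤ 2 * δ + ε / 2)
    (m cc : ℤ)
    (hprev : dist (u m) (u (cc - 1)) + (L - (6 * δ + ε)) ≤ dist (u m) (u cc)) :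
    dist (u m) (u cc) + (L - (6 * δ + ε)) ≤ dist (u m) (u (cc + 1)) := by
  have hδ := c.hδ; have hε := c.hε; have hεδ := c.hεδ; have hL300 := c.hL300
  have h1 := hρ cc
  have h2 := FSgp_min c.hyp (u cc) (u (cc - 1)) (u (cc + 1)) (u m)
  have hd1 : dist (u cc) (u (cc - 1)) = D' := by
    rw [dist_comm]
    have := hcons (cc - 1); rwa [show cc - 1 + 1 = cc by ring] at this
  have hd2 : dist (u cc) (u m) = dist (u m) (u cc) := dist_comm _ _
  have hd3 : dist (u (cc - 1)) (u m) = dist (u m) (u (cc - 1)) := dist_comm _ _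
  have hA : (D' + (L - (6 * δ + ε))) / 2 ≤ FSgp (u cc) (u (cc - 1)) (u m) := by
    unfold FSgp; rw [hd1, hd2, hd3]; linarith
  have hB : FSgp (u cc) (u m) (u (cc + 1)) ≤ 3 * δ + ε / 2 := by
    rcases le_total (FSgp (u cc) (u (cc - 1)) (u m)) (FSgp (u cc) (u m) (u (cc + 1)))
      with hc | hc
    · rw [min_eq_left hc] at h2; linarith
    · rw [min_eq_right hc] at h2; linarith
  have hdist := FSgp_dist (u cc) (u m) (u (cc + 1))
  have hd4 : dist (u cc) (u (cc + 1)) = D' := hcons cc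
  rw [hd4] at hdist
  rw [hd2] at hdist
  linarith

lemma FSchain_step (c : FSCtx G X δ ε L ξ O) (u : ℤ → X) (D' : ℝ)
    (hcons : ∀ k : ℤ, dist (u k) (u (k + 1)) = D')
    (hDl : L ≤ D')
    (hρ : ∀ k : ℤ, FSgp (u k) (u (k - 1)) (u (k + 1)) ≤ 2 * δ + ε / 2) :
    ∀ d : ℕ, ∀ m : ℤ,
      dist (u m) (u (m + d)) + (L - (6 * δ + ε)) ≤ dist (u m) (u (m + d + 1)) := by
  have hδ := c.hδ; have hε := c.hε; have hεδ := c.hεδ; have hL300 := c.hL300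
  intro d
  induction d with
  | zero =>
    intro m
    have h := hcons m
    simp only [Nat.cast_zero, add_zero] at *
    rw [dist_self, h]
    linarith
  | succ d ih =>
    intro m
    have hprev := ih m
    have e1 : m + ((d : ℕ) + 1 : ℕ) = m + (d : ℤ) + 1 := by push_cast; ring
    rw [e1]
    apply FSchain_step1 c u D' hcons hDl hρ m (m + (d : ℤ) + 1)
    rw [show m + (d : ℤ) + 1 - 1 = m + (d : ℤ) by ring]
    exact hprev

lemma FSchain_dropLast (c : FSCtx G X δ ε L ξ O) (u : ℤ → X) (D' : ℝ)
    (hcons : ∀ k : ℤ, dist (u k) (u (k + 1)) = D')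
    (hDl : L ≤ D')
    (hρ : ∀ k : ℤ, FSgp (u k) (u (k - 1)) (u (k + 1)) ≤ 2 * δ + ε / 2)
    (m n : ℤ) (h : m < n) :
    dist (u m) (u (n - 1)) + (L - (6 * δ + ε)) ≤ dist (u m) (u n) := by
  obtain ⟨d, hd⟩ : ∃ d : ℕ, n = m + d + 1 := ⟨(n - m - 1).toNat, by omega⟩
  subst hd
  have := FSchain_step c u D' hcons hDl hρ d m
  rw [show m + (d : ℤ) + 1 - 1 = m + (d : ℤ) by ring]
  exact this

lemma FSchain_growth (c : FSCtx G X δ ε L ξ O) (u : ℤ → X) (D' : ℝ)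
    (hcons : ∀ k : ℤ, dist (u k) (u (k + 1)) = D')
    (hDl : L ≤ D')
    (hρ : ∀ k : ℤ, FSgp (u k) (u (k - 1)) (u (k + 1)) ≤ 2 * δ + ε / 2)
    (m n : ℤ) (h : m ≤ n) :
    ((n - m : ℤ) : ℝ) * (L - (6 * δ + ε)) ≤ dist (u m) (u n) := by
  obtain ⟨d, hd⟩ : ∃ d : ℕ, n = m + d := ⟨(n - m).toNat, by omega⟩
  subst hd
  rw [show ((m + (d:ℤ) - m : ℤ) : ℝ) = (d : ℝ) by push_cast; ring]
  induction d with
  | zero => simp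
  | succ d ih =>
    have hstep := FSchain_step c u D' hcons hDl hρ d m
    have e1 : m + ((d : ℕ) + 1 : ℕ) = m + (d : ℤ) + 1 := by push_cast; ring
    rw [e1, show ((d : ℕ) + 1 : ℕ) = (d + 1 : ℕ) by rfl]
    have : ((d + 1 : ℕ) : ℝ) = (d : ℝ) + 1 := by push_cast; ring
    rw [this]
    have ihm := ih (by omega)
    nlinarith [ihm, hstep]

lemma FSchain_gpA (c : FSCtx G X δ ε L ξ O) (u : ℤ → X) (D' : ℝ)
    (hcons : ∀ k : ℤ, dist (u k) (u (k + 1)) = D')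
    (hDl : L ≤ D')
    (hρ : ∀ k : ℤ, FSgp (u k) (u (k - 1)) (u (k + 1)) ≤ 2 * δ + ε / 2)
    (m cc : ℤ) (h : m < cc) :
    FSgp (u cc) (u m) (u (cc + 1)) ≤ 3 * δ + ε / 2 := by
  have hδ := c.hδ; have hε := c.hε; have hεδ := c.hεδ; have hL300 := c.hL300
  have h1 := hρ cc
  have h2 := FSgp_min c.hyp (u cc) (u (cc - 1)) (u (cc + 1)) (u m)
  have hdrop := FSchain_dropLast c u D' hcons hDl hρ m cc h
  have hd1 : dist (u cc) (u (cc - 1)) = D' := by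
    rw [dist_comm]
    have := hcons (cc - 1); rwa [show cc - 1 + 1 = cc by ring] at this
  have hd2 : dist (u cc) (u m) = dist (u m) (u cc) := dist_comm _ _
  have hd3 : dist (u (cc - 1)) (u m) = dist (u m) (u (cc - 1)) := dist_comm _ _
  have hA : (D' + (L - (6 * δ + ε))) / 2 ≤ FSgp (u cc) (u (cc - 1)) (u m) := by
    unfold FSgp; rw [hd1, hd2, hd3]; linarith
  rcases le_total (FSgp (u cc) (u (cc - 1)) (u m)) (FSgp (u cc) (u m) (u (cc + 1)))
    with hc | hc
  · rw [min_eq_left hc] at h2; linarith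
  · rw [min_eq_right hc] at h2; linarith

end FS3
section FS4
set_option linter.unusedSectionVars false
variable {G X : Type*} [Group G] [MetricSpace X] [MulAction G X]
variable {δ ε L : ℝ} {ξ : G} {O : X}

lemma FSrev_cons (c : FSCtx G X δ ε L ξ O) (k : ℤ) :
    dist (FSorb ξ O (-k)) (FSorb ξ O (-(k + 1))) = dist O (ξ • O) := by
  rw [dist_comm]
  have := FSorb_consec c (-(k + 1))
  rwa [show -(k + 1) + 1 = -k by ring] at this

lemma FSrev_rho (c : FSCtx G X δ ε L ξ O) (k : ℤ) :
    FSgp (FSorb ξ O (-k)) (FSorb ξ O (-(k - 1))) (FSorb ξ O (-(k + 1))) ≤ 2 * δ + ε / 2 := by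
  rw [FSgp_symm]
  have := FSgp_consec c (-k)
  rwa [show -k - 1 = -(k + 1) by ring, show -k + 1 = -(k - 1) by ring] at this

lemma FSorb_dropLast (c : FSCtx G X δ ε L ξ O) (m n : ℤ) (h : m < n) :
    dist (FSorb ξ O m) (FSorb ξ O (n - 1)) + (L - (6 * δ + ε)) ≤
      dist (FSorb ξ O m) (FSorb ξ O n) :=
  FSchain_dropLast c (FSorb ξ O) (dist O (ξ • O)) (FSorb_consec c) (c.hdisp O)
    (FSgp_consec c) m n h

lemma FSorb_dropFirst (c : FSCtx G X δ ε L ξ O) (m n : ℤ) (h : m < n) :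
    dist (FSorb ξ O (m + 1)) (FSorb ξ O n) + (L - (6 * δ + ε)) ≤
      dist (FSorb ξ O m) (FSorb ξ O n) := by
  have hh := FSchain_dropLast c (fun k => FSorb ξ O (-k)) (dist O (ξ • O))
    (fun k => FSrev_cons c k) (c.hdisp O) (fun k => FSrev_rho c k) (-n) (-m) (by omega)
  rw [show -n = -(n) by ring] at hh
  rw [show (-(-n) : ℤ) = n by ring] at hh
  rw [show (-(-m - 1) : ℤ) = m + 1 by ring] at hh
  rw [show (-(-m) : ℤ) = m by ring] at hh
  rw [dist_comm (FSorb ξ O n) (FSorb ξ O (m + 1)),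
    dist_comm (FSorb ξ O n) (FSorb ξ O m)] at hh
  exact hh

lemma FSorb_growth (c : FSCtx G X δ ε L ξ O) (m n : ℤ) (h : m ≤ n) :
    ((n - m : ℤ) : ℝ) * (L - (6 * δ + ε)) ≤ dist (FSorb ξ O m) (FSorb ξ O n) :=
  FSchain_growth c (FSorb ξ O) (dist O (ξ • O)) (FSorb_consec c) (c.hdisp O)
    (FSgp_consec c) m n h

lemma FSorb_ne (c : FSCtx G X δ ε L ξ O) (m n : ℤ) (h : m ≠ n) :
    L - (6 * δ + ε) ≤ dist (FSorb ξ O m) (FSorb ξ O n) := by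
  rcases lt_or_gt_of_ne h with hlt | hgt
  · have := FSorb_dropLast c m n hlt
    have h0 : (0:ℝ) ≤ dist (FSorb ξ O m) (FSorb ξ O (n - 1)) := dist_nonneg
    linarith
  · have := FSorb_dropLast c n m hgt
    have h0 : (0:ℝ) ≤ dist (FSorb ξ O n) (FSorb ξ O (m - 1)) := dist_nonneg
    rw [dist_comm]
    linarith

lemma FSorb_gpB (c : FSCtx G X δ ε L ξ O) (m cc n : ℤ) (h1 : m < cc) (h2 : cc < n) :
    FSgp (FSorb ξ O cc) (FSorb ξ O m) (FSorb ξ O n) ≤ 4 * δ + ε / 2 := by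
  have hδ := c.hδ; have hε := c.hε; have hεδ := c.hεδ; have hL300 := c.hL300
  have hA := FSchain_gpA c (FSorb ξ O) (dist O (ξ • O)) (FSorb_consec c) (c.hdisp O)
    (FSgp_consec c) m cc h1
  have h2' := FSgp_min c.hyp (FSorb ξ O cc) (FSorb ξ O m) (FSorb ξ O (cc + 1)) (FSorb ξ O n)
  have hdrop := FSorb_dropFirst c cc n h2
  have hd1 : dist (FSorb ξ O cc) (FSorb ξ O (cc + 1)) = dist O (ξ • O) := FSorb_consec c cc
  have hDl : L ≤ dist O (ξ • O) := c.hdisp O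
  have hd2 : dist (FSorb ξ O n) (FSorb ξ O (cc + 1)) =
      dist (FSorb ξ O (cc + 1)) (FSorb ξ O n) := dist_comm _ _
  have hB : (L - (6 * δ + ε) + L) / 2 ≤
      FSgp (FSorb ξ O cc) (FSorb ξ O n) (FSorb ξ O (cc + 1)) := by
    unfold FSgp
    rw [dist_comm (FSorb ξ O cc) (FSorb ξ O n)]
    rw [hd1, hd2]
    have := dist_comm (FSorb ξ O cc) (FSorb ξ O n)
    linarith
  rcases le_total (FSgp (FSorb ξ O cc) (FSorb ξ O m) (FSorb ξ O n))
      (FSgp (FSorb ξ O cc) (FSorb ξ O n) (FSorb ξ O (cc + 1))) with hc | hc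
  · rw [min_eq_left hc] at h2'; linarith
  · rw [min_eq_right hc] at h2'; linarith

lemma FSorb_nearest (c : FSCtx G X δ ε L ξ O) (w : X) (b a : ℤ)
    (hb1 : dist w (FSorb ξ O b) ≤ dist w (FSorb ξ O (b - 1)))
    (hb2 : dist w (FSorb ξ O b) ≤ dist w (FSorb ξ O (b + 1)))
    (hab : a ≠ b) :
    dist w (FSorb ξ O b) + dist (FSorb ξ O b) (FSorb ξ O a) - (L + ε + 2 * δ) ≤
      dist w (FSorb ξ O a) := by
  have hδ := c.hδ; have hε := c.hε; have hεδ := c.hεδ; have hL300 := c.hL300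
  have hDl : L ≤ dist O (ξ • O) := c.hdisp O
  have hDu : dist O (ξ • O) ≤ L + ε := c.hO
  rcases lt_or_gt_of_ne hab with hlt | hgt
  · -- a < b, use neighbor b-1
    have h2 := FSgp_min c.hyp (FSorb ξ O b) w (FSorb ξ O (b - 1)) (FSorb ξ O a)
    have hd1 : dist (FSorb ξ O b) (FSorb ξ O (b - 1)) = dist O (ξ • O) := by
      rw [dist_comm]
      have := FSorb_consec c (b - 1)
      rwa [show b - 1 + 1 = b by ring] at this
    have hupper : FSgp (FSorb ξ O b) w (FSorb ξ O (b - 1)) ≤ dist O (ξ • O) / 2 := by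
      unfold FSgp
      linarith [hd1, hb1, dist_comm (FSorb ξ O b) w]
    have hdrop := FSorb_dropLast c a b hlt
    have hbig : (L - (6 * δ + ε) + dist O (ξ • O)) / 2 ≤
        FSgp (FSorb ξ O b) (FSorb ξ O a) (FSorb ξ O (b - 1)) := by
      unfold FSgp
      linarith [hd1, hdrop, dist_comm (FSorb ξ O b) (FSorb ξ O a)]
    have hgoal : FSgp (FSorb ξ O b) w (FSorb ξ O a) ≤ dist O (ξ • O) / 2 + δ := by
      rcases le_total (FSgp (FSorb ξ O b) w (FSorb ξ O a))
          (FSgp (FSorb ξ O b) (FSorb ξ O a) (FSorb ξ O (b - 1))) with hc | hc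
      · rw [min_eq_left hc] at h2; linarith
      · rw [min_eq_right hc] at h2; linarith
    have hdist := FSgp_dist (FSorb ξ O b) w (FSorb ξ O a)
    have e1 := dist_comm (FSorb ξ O b) w
    have e2 := dist_comm w (FSorb ξ O a)
    linarith
  · -- a > b, use neighbor b+1
    have h2 := FSgp_min c.hyp (FSorb ξ O b) w (FSorb ξ O (b + 1)) (FSorb ξ O a)
    have hd1 : dist (FSorb ξ O b) (FSorb ξ O (b + 1)) = dist O (ξ • O) := FSorb_consec c b
    have hupper : FSgp (FSorb ξ O b) w (FSorb ξ O (b + 1)) ≤ dist O (ξ • O) / 2 := by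
      unfold FSgp
      linarith [hd1, hb2, dist_comm (FSorb ξ O b) w]
    have hdrop := FSorb_dropFirst c b a hgt
    have hbig : (L - (6 * δ + ε) + dist O (ξ • O)) / 2 ≤
        FSgp (FSorb ξ O b) (FSorb ξ O a) (FSorb ξ O (b + 1)) := by
      unfold FSgp
      linarith [hd1, hdrop, dist_comm (FSorb ξ O (b + 1)) (FSorb ξ O a)]
    have hgoal : FSgp (FSorb ξ O b) w (FSorb ξ O a) ≤ dist O (ξ • O) / 2 + δ := by
      rcases le_total (FSgp (FSorb ξ O b) w (FSorb ξ O a))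
          (FSgp (FSorb ξ O b) (FSorb ξ O a) (FSorb ξ O (b + 1))) with hc | hc
      · rw [min_eq_left hc] at h2; linarith
      · rw [min_eq_right hc] at h2; linarith
    have hdist := FSgp_dist (FSorb ξ O b) w (FSorb ξ O a)
    have e1 := dist_comm (FSorb ξ O b) w
    have e2 := dist_comm w (FSorb ξ O a)
    linarith

end FS4
section FS5
set_option linter.unusedSectionVars false
variable {G X : Type*} [Group G] [MetricSpace X] [MulAction G X]
variable {δ ε L : ℝ} {ξ : G} {O : X}

lemma FSattain_lt (c : FSCtx G X δ ε L ξ O) (w : X) (s : ℤ) :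
    ∃ p : ℤ, p < s ∧ ∀ a : ℤ, a < s → dist w (FSorb ξ O p) ≤ dist w (FSorb ξ O a) := by
  have hδ := c.hδ; have hε := c.hε; have hεδ := c.hεδ; have hL300 := c.hL300
  have hC : 0 < L - (6 * δ + ε) := by linarith
  set R := dist w (FSorb ξ O (s - 1)) with hR
  obtain ⟨M, hM⟩ := exists_nat_gt ((2 * R) / (L - (6 * δ + ε)))
  have key : ∀ a : ℤ, a < s - 1 - M → R < dist w (FSorb ξ O a) := by
    intro a ha
    have hg := FSorb_growth c a (s - 1) (by omega)
    have hMlt : (M : ℝ) < ((s - 1 - a : ℤ) : ℝ) := by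
      exact_mod_cast (by omega : ((M : ℤ)) < s - 1 - a)
    have h2R : 2 * R < ((s - 1 - a : ℤ) : ℝ) * (L - (6 * δ + ε)) := by
      have h1 := (div_lt_iff₀ hC).mp hM
      nlinarith
    have htri := dist_triangle (FSorb ξ O a) w (FSorb ξ O (s - 1))
    have hcm := dist_comm (FSorb ξ O a) w
    linarith
  obtain ⟨p, hpmem, hpmin⟩ := Finset.exists_min_image
    (Finset.Icc (s - 1 - (M : ℤ)) (s - 1)) (fun a => dist w (FSorb ξ O a))
    ⟨s - 1, Finset.mem_Icc.mpr ⟨by omega, le_refl _⟩⟩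
  refine ⟨p, ?_, ?_⟩
  · have := Finset.mem_Icc.mp hpmem; omega
  · intro a ha
    by_cases hmem : a ∈ Finset.Icc (s - 1 - (M : ℤ)) (s - 1)
    · exact hpmin a hmem
    · simp only [Finset.mem_Icc, not_and, not_le] at hmem
      have halt : a < s - 1 - M := by omega
      have h1 := key a halt
      have h2 := hpmin (s - 1) (Finset.mem_Icc.mpr ⟨by omega, le_refl _⟩)
      linarith
  
lemma FSattain_gt (c : FSCtx G X δ ε L ξ O) (w : X) (s : ℤ) :
    ∃ q : ℤ, s < q ∧ ∀ a : ℤ, s < a → dist w (FSorb ξ O q) ≤ dist w (FSorb ξ O a) := by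
  have hδ := c.hδ; have hε := c.hε; have hεδ := c.hεδ; have hL300 := c.hL300
  have hC : 0 < L - (6 * δ + ε) := by linarith
  set R := dist w (FSorb ξ O (s + 1)) with hR
  obtain ⟨M, hM⟩ := exists_nat_gt ((2 * R) / (L - (6 * δ + ε)))
  have key : ∀ a : ℤ, s + 1 + M < a → R < dist w (FSorb ξ O a) := by
    intro a ha
    have hg := FSorb_growth c (s + 1) a (by omega)
    have hMlt : (M : ℝ) < ((a - (s + 1) : ℤ) : ℝ) := by
      exact_mod_cast (by omega : ((M : ℤ)) < a - (s + 1))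
    have h2R : 2 * R < ((a - (s + 1) : ℤ) : ℝ) * (L - (6 * δ + ε)) := by
      have h1 := (div_lt_iff₀ hC).mp hM
      nlinarith
    have htri := dist_triangle (FSorb ξ O (s + 1)) w (FSorb ξ O a)
    have hcm := dist_comm (FSorb ξ O (s + 1)) w
    have hcm2 := dist_comm (FSorb ξ O (s + 1)) (FSorb ξ O a)
    linarith
  obtain ⟨p, hpmem, hpmin⟩ := Finset.exists_min_image
    (Finset.Icc (s + 1) (s + 1 + (M : ℤ))) (fun a => dist w (FSorb ξ O a))
    ⟨s + 1, Finset.mem_Icc.mpr ⟨le_refl _, by omega⟩⟩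
  refine ⟨p, ?_, ?_⟩
  · have := Finset.mem_Icc.mp hpmem; omega
  · intro a ha
    by_cases hmem : a ∈ Finset.Icc (s + 1) (s + 1 + (M : ℤ))
    · exact hpmin a hmem
    · simp only [Finset.mem_Icc, not_and, not_le] at hmem
      have halt : s + 1 + M < a := by omega
      have h1 := key a halt
      have h2 := hpmin (s + 1) (Finset.mem_Icc.mpr ⟨le_refl _, by omega⟩)
      linarith

end FS5
section FS6
set_option linter.unusedSectionVars false
variable {G X : Type*} [Group G] [MetricSpace X] [MulAction G X]
variable {δ ε L : ℝ} {ξ : G} {O : X}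

lemma FSle_infDist {x : X} {S : Set X} (hS : S.Nonempty) {b : ℝ}
    (h : ∀ y ∈ S, b ≤ dist x y) : b ≤ infDist x S := by
  by_contra hc
  push_neg at hc
  obtain ⟨y, hy, hlt⟩ := (infDist_lt_iff hS).mp hc
  exact absurd (h y hy) (not_le.mpr hlt)

lemma FSsep (c : FSCtx G X δ ε L ξ O) (v z : X) (bv bz s : ℤ)
    (hv : ∀ a : ℤ, dist v (FSorb ξ O bv) ≤ dist v (FSorb ξ O a))
    (hz : ∀ a : ℤ, dist z (FSorb ξ O bz) ≤ dist z (FSorb ξ O a))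
    (h1 : bv < s) (h2 : s < bz) :
    dist (FSorb ξ O s) v + dist (FSorb ξ O s) z - (12 * δ + ε) ≤ dist v z := by
  have hδ := c.hδ; have hε := c.hε; have hεδ := c.hεδ; have hL300 := c.hL300
  obtain ⟨seg, f, hf0, hfT, hfiso, -⟩ := c.hgeo v z
  set T := dist v z with hTdef
  have hT0 : (0:ℝ) ≤ T := dist_nonneg
  set A : Set X := FSorb ξ O '' {a : ℤ | a < s} with hAdef
  set B : Set X := FSorb ξ O '' {a : ℤ | s < a} with hBdef
  have hAne : A.Nonempty := ⟨FSorb ξ O bv, ⟨bv, h1, rfl⟩⟩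
  have hBne : B.Nonempty := ⟨FSorb ξ O bz, ⟨bz, h2, rfl⟩⟩
  have hfc : ContinuousOn f (Icc 0 T) := by
    apply LipschitzOnWith.continuousOn (K := 1)
    rw [lipschitzOnWith_iff_dist_le_mul]
    intro x hx y hy
    rw [hfiso x hx y hy, Real.dist_eq]
    simp
  have hΦ1 : Continuous
      (fun x : X => infDist x A - min (dist x (FSorb ξ O s)) (infDist x B)) :=
    (continuous_infDist_pt A).sub
      (((continuous_id.dist continuous_const)).min (continuous_infDist_pt B))
  have hΦ2 : Continuous
      (fun x : X => min (infDist x A) (dist x (FSorb ξ O s)) - infDist x B) :=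
    (((continuous_infDist_pt A)).min (continuous_id.dist continuous_const)).sub
      (continuous_infDist_pt B)
  have hc1 : ContinuousOn
      (fun t : ℝ => infDist (f t) A - min (dist (f t) (FSorb ξ O s)) (infDist (f t) B))
      (Icc 0 T) := hΦ1.comp_continuousOn hfc
  have hc2 : ContinuousOn
      (fun t : ℝ => min (infDist (f t) A) (dist (f t) (FSorb ξ O s)) - infDist (f t) B)
      (Icc 0 T) := hΦ2.comp_continuousOn hfc
  -- endpoint signs
  have hvA : infDist v A ≤ dist v (FSorb ξ O bv) := infDist_le_dist_of_mem ⟨bv, h1, rfl⟩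
  have hvB : dist v (FSorb ξ O bv) ≤ infDist v B := by
    refine FSle_infDist hBne ?_
    rintro y ⟨a, -, rfl⟩
    exact hv a
  have hzB : infDist z B ≤ dist z (FSorb ξ O bz) := infDist_le_dist_of_mem ⟨bz, h2, rfl⟩
  have hzA : dist z (FSorb ξ O bz) ≤ infDist z A := by
    refine FSle_infDist hAne ?_
    rintro y ⟨a, -, rfl⟩
    exact hz a
  have hF10 : infDist (f 0) A - min (dist (f 0) (FSorb ξ O s)) (infDist (f 0) B) ≤ 0 := by
    rw [hf0]
    have hmin : dist v (FSorb ξ O bv) ≤ min (dist v (FSorb ξ O s)) (infDist v B) :=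
      le_min (hv s) hvB
    linarith
  have hF2T : 0 ≤ min (infDist (f T) A) (dist (f T) (FSorb ξ O s)) - infDist (f T) B := by
    rw [hfT]
    have hmin : dist z (FSorb ξ O bz) ≤ min (infDist z A) (dist z (FSorb ξ O s)) :=
      le_min hzA (hz s)
    linarith
  have hle12 : ∀ t : ℝ,
      min (infDist (f t) A) (dist (f t) (FSorb ξ O s)) - infDist (f t) B ≤
      infDist (f t) A - min (dist (f t) (FSorb ξ O s)) (infDist (f t) B) := by
    intro t
    have l1 := min_le_left (infDist (f t) A) (dist (f t) (FSorb ξ O s))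
    have l2 := min_le_right (dist (f t) (FSorb ξ O s)) (infDist (f t) B)
    linarith
  have hF1T : (0:ℝ) ≤ infDist (f T) A - min (dist (f T) (FSorb ξ O s)) (infDist (f T) B) :=
    le_trans hF2T (hle12 T)
  obtain ⟨t₁, ht₁mem, ht₁⟩ := intermediate_value_Icc hT0 hc1 ⟨hF10, hF1T⟩
  simp only at ht₁
  have hF2t₁ : min (infDist (f t₁) A) (dist (f t₁) (FSorb ξ O s)) - infDist (f t₁) B ≤ 0 := by
    have := hle12 t₁; linarith
  obtain ⟨t₂, ht₂mem, ht₂⟩ := intermediate_value_Icc ht₁mem.2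
    (hc2.mono (Icc_subset_Icc ht₁mem.1 le_rfl)) ⟨hF2t₁, hF2T⟩
  simp only at ht₂
  have ht₂Icc : t₂ ∈ Icc 0 T := ⟨le_trans ht₁mem.1 ht₂mem.1, ht₂mem.2⟩
  -- attained nearest points on each side
  obtain ⟨p, hps, hp⟩ := FSattain_lt c (f t₁) s
  obtain ⟨q, hqs, hq⟩ := FSattain_gt c (f t₂) s
  have hpinf : dist (f t₁) (FSorb ξ O p) ≤ infDist (f t₁) A := by
    refine FSle_infDist hAne ?_
    rintro y ⟨a, ha, rfl⟩
    exact hp a ha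
  have claim1 : dist (f t₁) (FSorb ξ O p) ≤ dist (f t₁) (FSorb ξ O s) := by
    have h0 : infDist (f t₁) A = min (dist (f t₁) (FSorb ξ O s)) (infDist (f t₁) B) := by
      linarith
    have := min_le_left (dist (f t₁) (FSorb ξ O s)) (infDist (f t₁) B)
    linarith
  have hqinf : dist (f t₂) (FSorb ξ O q) ≤ infDist (f t₂) B := by
    refine FSle_infDist hBne ?_
    rintro y ⟨a, ha, rfl⟩
    exact hq a ha
  have claim2 : dist (f t₂) (FSorb ξ O q) ≤ dist (f t₂) (FSorb ξ O s) := by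
    have h0 : infDist (f t₂) B = min (infDist (f t₂) A) (dist (f t₂) (FSorb ξ O s)) := by
      linarith
    have := min_le_right (infDist (f t₂) A) (dist (f t₂) (FSorb ξ O s))
    linarith
  -- Gromov product estimates at basepoint orb s
  have gA : (L - (6 * δ + ε)) / 2 ≤ FSgp (FSorb ξ O s) (FSorb ξ O p) (f t₁) := by
    unfold FSgp
    have hne := FSorb_ne c p s (by omega)
    have c1 := dist_comm (FSorb ξ O s) (FSorb ξ O p)
    have c2 := dist_comm (FSorb ξ O s) (f t₁)
    have c3 := dist_comm (FSorb ξ O p) (f t₁)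
    linarith [claim1]
  have gB : (L - (6 * δ + ε)) / 2 ≤ FSgp (FSorb ξ O s) (f t₂) (FSorb ξ O q) := by
    unfold FSgp
    have hne := FSorb_ne c s q (by omega)
    have c1 := dist_comm (FSorb ξ O s) (f t₂)
    have c2 := dist_comm (f t₂) (FSorb ξ O q)
    linarith [claim2]
  have hPQ : FSgp (FSorb ξ O s) (FSorb ξ O p) (FSorb ξ O q) ≤ 4 * δ + ε / 2 :=
    FSorb_gpB c p s q hps hqs
  have step1 := FSgp_min c.hyp (FSorb ξ O s) (FSorb ξ O p) (FSorb ξ O q) (f t₁)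
  have g1 : FSgp (FSorb ξ O s) (f t₁) (FSorb ξ O q) ≤ 5 * δ + ε / 2 := by
    rcases le_total (FSgp (FSorb ξ O s) (FSorb ξ O p) (f t₁))
        (FSgp (FSorb ξ O s) (f t₁) (FSorb ξ O q)) with hc | hc
    · rw [min_eq_left hc] at step1; linarith
    · rw [min_eq_right hc] at step1; linarith
  have step2 := FSgp_min c.hyp (FSorb ξ O s) (f t₁) (FSorb ξ O q) (f t₂)
  have g2 : FSgp (FSorb ξ O s) (f t₁) (f t₂) ≤ 6 * δ + ε / 2 := by
    rcases le_total (FSgp (FSorb ξ O s) (f t₁) (f t₂))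
        (FSgp (FSorb ξ O s) (f t₂) (FSorb ξ O q)) with hc | hc
    · rw [min_eq_left hc] at step2; linarith
    · rw [min_eq_right hc] at step2; linarith
  have hw12 := FSgp_dist (FSorb ξ O s) (f t₁) (f t₂)
  -- geodesic parameters
  have h0mem : (0:ℝ) ∈ Icc (0:ℝ) T := ⟨le_refl _, hT0⟩
  have hTmem : T ∈ Icc (0:ℝ) T := ⟨hT0, le_refl _⟩
  have d1 : dist v (f t₁) = t₁ := by
    have h := hfiso 0 h0mem t₁ ht₁mem
    rw [hf0] at h
    rw [h, zero_sub, abs_neg, abs_of_nonneg ht₁mem.1]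
  have d2 : dist (f t₁) (f t₂) = t₂ - t₁ := by
    have h := hfiso t₁ ht₁mem t₂ ht₂Icc
    rw [h, abs_of_nonpos (by linarith [ht₂mem.1]), neg_sub]
  have d3 : dist (f t₂) z = T - t₂ := by
    have h := hfiso t₂ ht₂Icc T hTmem
    rw [hfT] at h
    rw [h, abs_of_nonpos (by linarith [ht₂mem.2]), neg_sub]
  have tri1 := dist_triangle (FSorb ξ O s) (f t₁) v
  have tri2 := dist_triangle (FSorb ξ O s) (f t₂) z
  have c1 := dist_comm (f t₁) v
  show dist (FSorb ξ O s) v + dist (FSorb ξ O s) z - (12 * δ + ε) ≤ T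
  linarith [d1, d2, d3, hw12, g2, tri1, tri2]

end FS6
section FS7
set_option linter.unusedSectionVars false
variable {G X : Type*} [Group G] [MetricSpace X] [MulAction G X]
variable {δ ε L : ℝ} {ξ : G} {O : X}

lemma FSorb_three (c : FSCtx G X δ ε L ξ O) :
    dist (FSorb ξ O 0) (FSorb ξ O 3) ≤ 3 * (L + ε) := by
  have t4 := dist_triangle4 (FSorb ξ O 0) (FSorb ξ O 1) (FSorb ξ O 2) (FSorb ξ O 3)
  have h0 := FSorb_consec c 0
  have h1 := FSorb_consec c 1
  have h2 := FSorb_consec c 2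
  norm_num at h0 h1 h2
  have hO := c.hO
  linarith

lemma FSorb_O_bound (c : FSCtx G X δ ε L ξ O) (s : ℤ) (h1 : -2 ≤ s) (h2 : s ≤ 1) :
    dist O (FSorb ξ O s) ≤ 2 * (L + ε) := by
  have hδ := c.hδ; have hε := c.hε; have hL300 := c.hL300
  have hLε : 0 ≤ L + ε := by linarith
  have hO := c.hO
  interval_cases s
  · -- s = -2
    have t := dist_triangle (FSorb ξ O 0) (FSorb ξ O (-1)) (FSorb ξ O (-2))
    have h1 := FSorb_consec c (-1)
    have h2 := FSorb_consec c (-2)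
    norm_num at h1 h2
    have hrw : dist O (FSorb ξ O (-2)) = dist (FSorb ξ O 0) (FSorb ξ O (-2)) := by
      rw [FSorb_zero]
    rw [hrw]
    have c1 := dist_comm (FSorb ξ O (-1)) (FSorb ξ O 0)
    have c2 := dist_comm (FSorb ξ O (-2)) (FSorb ξ O (-1))
    linarith
  · -- s = -1
    have h1 := FSorb_consec c (-1)
    norm_num at h1
    have hrw : dist O (FSorb ξ O (-1)) = dist (FSorb ξ O 0) (FSorb ξ O (-1)) := by
      rw [FSorb_zero]
    rw [hrw]
    have c1 := dist_comm (FSorb ξ O (-1)) (FSorb ξ O 0)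
    linarith
  · -- s = 0
    rw [FSorb_zero, dist_self]; linarith
  · -- s = 1
    have h1 := FSorb_consec c 0
    norm_num at h1
    have hrw : dist O (FSorb ξ O (1)) = dist (FSorb ξ O 0) (FSorb ξ O (1)) := by
      rw [FSorb_zero]
    rw [hrw]
    linarith

lemma FSsep_O (c : FSCtx G X δ ε L ξ O) (v z : X) (bv bz s : ℤ)
    (hv : ∀ a : ℤ, dist v (FSorb ξ O bv) ≤ dist v (FSorb ξ O a))
    (hz : ∀ a : ℤ, dist z (FSorb ξ O bz) ≤ dist z (FSorb ξ O a))
    (h1 : bv < s) (h2 : s < bz) (hs1 : -2 ≤ s) (hs2 : s ≤ 1) :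
    dist O v + dist O z - (4 * (L + ε) + 12 * δ + ε) ≤ dist v z := by
  have h := FSsep c v z bv bz s hv hz h1 h2
  have hOs := FSorb_O_bound c s hs1 hs2
  have t1 := dist_triangle O (FSorb ξ O s) v
  have t2 := dist_triangle O (FSorb ξ O s) z
  linarith

lemma FSsymm_bound (c : FSCtx G X δ ε L ξ O) (z : X) (b aa : ℤ)
    (hz : ∀ a : ℤ, dist z (FSorb ξ O b) ≤ dist z (FSorb ξ O a))
    (hcase : (0 ≤ b ∧ aa = 2 * b + 3) ∨ (b ≤ -1 ∧ aa = 2 * b - 1)) :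
    |dist (FSorb ξ O aa) z - dist (FSorb ξ O 0) z| ≤ 4 * (L + ε) + 2 * δ := by
  have hδ := c.hδ; have hε := c.hε; have hεδ := c.hεδ; have hL300 := c.hL300
  have hO := c.hO
  have hLε : 0 ≤ L + ε := by linarith
  have haab : aa ≠ b := by omega
  have n2 := FSorb_nearest c z b aa (hz (b - 1)) (hz (b + 1)) haab
  have n4 : dist z (FSorb ξ O b) + dist (FSorb ξ O b) (FSorb ξ O 0) - (L + ε + 2 * δ)
      ≤ dist z (FSorb ξ O 0) := by
    by_cases hb0 : b = 0
    · subst hb0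
      rw [dist_self]
      linarith [hz 0]
    · exact FSorb_nearest c z b 0 (hz (b - 1)) (hz (b + 1)) (Ne.symm hb0)
  have n1 := dist_triangle z (FSorb ξ O b) (FSorb ξ O aa)
  have n3 := dist_triangle z (FSorb ξ O b) (FSorb ξ O 0)
  -- bounds on |dist(orb b)(orb aa) - dist(orb b)(orb 0)|
  have n56 : dist (FSorb ξ O b) (FSorb ξ O aa) ≤ dist (FSorb ξ O b) (FSorb ξ O 0) + 3 * (L + ε)
      ∧ dist (FSorb ξ O b) (FSorb ξ O 0) - 3 * (L + ε) ≤ dist (FSorb ξ O b) (FSorb ξ O aa) := by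
    rcases hcase with ⟨hb, haa⟩ | ⟨hb, haa⟩
    · -- aa = 2b+3
      have e1 : dist (FSorb ξ O b) (FSorb ξ O aa) = dist (FSorb ξ O 0) (FSorb ξ O (b + 3)) := by
        have h := FSorb_shift c 0 (b + 3) b
        rw [zero_add, show b + 3 + b = 2 * b + 3 by ring] at h
        rw [haa, ← h]
      have e2 : dist (FSorb ξ O (b + 3)) (FSorb ξ O b) = dist (FSorb ξ O 3) (FSorb ξ O 0) := by
        have h := FSorb_shift c 3 0 b
        rw [zero_add, show (3:ℤ) + b = b + 3 by ring] at h
        rw [← h]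
      have h3 := FSorb_three c
      have t1 := dist_triangle (FSorb ξ O 0) (FSorb ξ O b) (FSorb ξ O (b + 3))
      have t2 := dist_triangle (FSorb ξ O 0) (FSorb ξ O (b + 3)) (FSorb ξ O b)
      have c1 := dist_comm (FSorb ξ O b) (FSorb ξ O 0)
      have c2 := dist_comm (FSorb ξ O 3) (FSorb ξ O 0)
      have c3 := dist_comm (FSorb ξ O b) (FSorb ξ O (b + 3))
      constructor <;> [rw [e1]; rw [e1]] <;> linarith [e2]
    · -- aa = 2b-1
      have e1 : dist (FSorb ξ O b) (FSorb ξ O aa) = dist (FSorb ξ O 0) (FSorb ξ O (b - 1)) := by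
        have h := FSorb_shift c 0 (b - 1) b
        rw [zero_add, show b - 1 + b = 2 * b - 1 by ring] at h
        rw [haa, ← h]
      have hcons : dist (FSorb ξ O (b - 1)) (FSorb ξ O b) = dist O (ξ • O) := by
        have := FSorb_consec c (b - 1)
        rwa [show b - 1 + 1 = b by ring] at this
      have t1 := dist_triangle (FSorb ξ O 0) (FSorb ξ O b) (FSorb ξ O (b - 1))
      have t2 := dist_triangle (FSorb ξ O 0) (FSorb ξ O (b - 1)) (FSorb ξ O b)
      have c1 := dist_comm (FSorb ξ O b) (FSorb ξ O 0)
      have c2 := dist_comm (FSorb ξ O b) (FSorb ξ O (b - 1))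
      constructor <;> rw [e1] <;> linarith
  obtain ⟨n5, n6⟩ := n56
  have cz1 := dist_comm z (FSorb ξ O aa)
  have cz2 := dist_comm z (FSorb ξ O 0)
  rw [abs_le]
  constructor <;> linarith

lemma FScore_neg (c : FSCtx G X δ ε L ξ O) (v z : X) (bv bz t : ℤ)
    (hv : ∀ a : ℤ, dist v (FSorb ξ O bv) ≤ dist v (FSorb ξ O a))
    (hz : ∀ a : ℤ, dist z (FSorb ξ O bz) ≤ dist z (FSorb ξ O a))
    (hcase : (0 ≤ bz ∧ -t = 2 * bz + 3) ∨ (bz ≤ -1 ∧ -t = 2 * bz - 1))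
    (hsep : ∃ s : ℤ, -2 ≤ s ∧ s ≤ 1 ∧
      ((bv < s ∧ s < bz + t) ∨ (bz + t < s ∧ s < bv))) :
    |dist v ((ξ ^ t) • z) - (dist O v + dist O z)| ≤ 8 * (L + ε) + 14 * δ + ε := by
  have hδ := c.hδ; have hε := c.hε; have hεδ := c.hεδ; have hL300 := c.hL300
  set zm := (ξ ^ t) • z with hzm
  have hznear : ∀ a : ℤ, dist zm (FSorb ξ O (bz + t)) ≤ dist zm (FSorb ξ O a) := by
    intro a
    rw [hzm, FSorb_dist_smul c t z (bz + t), FSorb_dist_smul c t z a,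
      show bz + t - t = bz by ring]
    exact hz (a - t)
  have hOzm : dist O zm = dist (FSorb ξ O (-t)) z := by
    have h := c.hiso (ξ ^ (-t)) O ((ξ ^ t) • z)
    rw [smul_smul, ← zpow_add, show -t + t = 0 by ring, zpow_zero, one_smul] at h
    exact h.symm
  have hsym := FSsymm_bound c z bz (-t) hz hcase
  rw [FSorb_zero] at hsym
  rw [← hOzm] at hsym
  -- hsym : |dist O zm - dist O z| ≤ 4 (L+ε) + 2δ
  obtain ⟨s, hs1, hs2, hor⟩ := hsep
  have hlow : dist O v + dist O zm - (4 * (L + ε) + 12 * δ + ε) ≤ dist v zm := by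
    rcases hor with ⟨ha, hb⟩ | ⟨ha, hb⟩
    · exact FSsep_O c v zm bv (bz + t) s hv hznear ha hb hs1 hs2
    · have h := FSsep_O c zm v (bz + t) bv s hznear hv ha hb hs1 hs2
      rw [dist_comm zm v] at h
      linarith
  have hup : dist v zm ≤ dist v O + dist O zm := dist_triangle _ _ _
  have hc1 := dist_comm v O
  rw [abs_le] at hsym ⊢
  constructor <;> linarith [hsym.1, hsym.2]

/-- exponent of an index -/
def FSe (k : ℤ) : ℤ := if 0 < k then k - 1 else k

lemma FSorbitPt_eq (ξ : G) (O : X) (i : ℤ) : orbitPt ξ O i = FSorb ξ O (FSe i) := by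
  unfold orbitPt FSorb FSe
  split_ifs <;> rfl

lemma FSnearest_of_jx {jx : X → ℤ} (hjx : IsIndexFun ξ O jx) (w : X) :
    ∀ a : ℤ, dist w (FSorb ξ O (FSe (jx w))) ≤ dist w (FSorb ξ O a) := by
  intro a
  by_cases h : 0 ≤ a
  · have hk := (hjx w).2.1 (a + 1) (by omega)
    rw [FSorbitPt_eq, FSorbitPt_eq] at hk
    rwa [show FSe (a + 1) = a by unfold FSe; rw [if_pos (by omega)]; ring] at hk
  · have hk := (hjx w).2.1 a (by omega)
    rw [FSorbitPt_eq, FSorbitPt_eq] at hk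
    rwa [show FSe a = a by unfold FSe; rw [if_neg (by omega)]] at hk

end FS7
/-- The norm is almost multiplicative for the twisted product:
`|‖α⋆β‖ − (‖α‖ + ‖β‖)| ≤ Δ⋆ = 12L + 758δ + 12ε`. -/
theorem stmt16 {G X : Type*} [Group G] [MetricSpace X] [MulAction G X]
    [ProperSpace X] (δ ε L : ℝ)
    (hδ : 0 < δ) (hε : 0 < ε) (hεδ : ε < δ)
    (hyp : FourPointHyp X δ) (hgeo : IsGeodesicSpace X)
    (hiso : IsomAction G X)
    (ξ : G) (hhyp : IsHypElem X ξ) (τ : ℝ → X) (hax : IsAxisAct ξ τ)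
    (hL : L = ⨅ x : X, dist x (ξ • x)) (hL300 : 300 * δ ≤ L)
    (O : X) (hO : dist O (ξ • O) ≤ L + ε)
    (jx : X → ℤ) (hjx : IsIndexFun ξ O jx) :
    ∀ α β : G,
      |dist O (twProd ξ O jx α β • O) - (dist O (α • O) + dist O (β • O))| ≤
        12 * L + 758 * δ + 12 * ε := by
  intro α β
  have hdisp : ∀ x : X, L ≤ dist x (ξ • x) := by
    intro x
    rw [hL]
    apply ciInf_le
    refine ⟨0, ?_⟩
    rintro r ⟨y, rfl⟩
    exact dist_nonneg
  have c : FSCtx G X δ ε L ξ O := ⟨hδ, hε, hεδ, hyp, hgeo, hiso, hdisp, hL300, hO⟩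
  have hL0 : 0 < L := by linarith
  have hval : ∀ γ : G, dist O ((α * γ) • O) = dist (α⁻¹ • O) (γ • O) := by
    intro γ
    have h := hiso α⁻¹ O ((α * γ) • O)
    rw [← mul_smul, inv_mul_cancel_left] at h
    exact h.symm
  have hnormα : dist O (α • O) = dist (α⁻¹ • O) O := by
    have h := hiso α⁻¹ O (α • O)
    rw [inv_smul_smul] at h
    exact h.symm
  have hvnear := FSnearest_of_jx hjx (α⁻¹ • O)
  have hznear := FSnearest_of_jx hjx (β • O)
  have hi0 : jx (α⁻¹ • O) ≠ 0 := (hjx _).1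
  have hj0 : jx (β • O) ≠ 0 := (hjx _).1
  have hbv1 : 0 < jx (α⁻¹ • O) → FSe (jx (α⁻¹ • O)) = jx (α⁻¹ • O) - 1 := fun h => by
    unfold FSe; rw [if_pos h]
  have hbv2 : ¬0 < jx (α⁻¹ • O) → FSe (jx (α⁻¹ • O)) = jx (α⁻¹ • O) := fun h => by
    unfold FSe; rw [if_neg h]
  have hbz1 : 0 < jx (β • O) → FSe (jx (β • O)) = jx (β • O) - 1 := fun h => by
    unfold FSe; rw [if_pos h]
  have hbz2 : ¬0 < jx (β • O) → FSe (jx (β • O)) = jx (β • O) := fun h => by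
    unfold FSe; rw [if_neg h]
  by_cases hsep : Sep1 (jx (α⁻¹ • O)) (jx (β • O))
  · -- ordinary product
    have htw : twProd ξ O jx α β = α * β := by rw [twProd, if_pos hsep]
    rw [htw, hval β]
    have hsep' :
        ((jx (α⁻¹ • O) < 1 ∨ jx (β • O) < 1) ∧ (1 < jx (α⁻¹ • O) ∨ 1 < jx (β • O))) ∨
        ((jx (α⁻¹ • O) < -1 ∨ jx (β • O) < -1) ∧
          (-1 < jx (α⁻¹ • O) ∨ -1 < jx (β • O))) := by
      rcases hsep with ⟨h1, h2⟩ | ⟨h1, h2⟩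
      · exact Or.inl ⟨min_lt_iff.mp h1, lt_max_iff.mp h2⟩
      · exact Or.inr ⟨min_lt_iff.mp h1, lt_max_iff.mp h2⟩
    have hexp :
        (FSe (jx (α⁻¹ • O)) < 0 ∧ 0 < FSe (jx (β • O))) ∨
        (FSe (jx (β • O)) < 0 ∧ 0 < FSe (jx (α⁻¹ • O))) ∨
        (FSe (jx (α⁻¹ • O)) < -1 ∧ -1 < FSe (jx (β • O))) ∨
        (FSe (jx (β • O)) < -1 ∧ -1 < FSe (jx (α⁻¹ • O))) := by omega
    have hlow : dist O (α⁻¹ • O) + dist O (β • O) - (4 * (L + ε) + 12 * δ + ε) ≤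
        dist (α⁻¹ • O) (β • O) := by
      rcases hexp with ⟨ha, hb⟩ | ⟨ha, hb⟩ | ⟨ha, hb⟩ | ⟨ha, hb⟩
      · exact FSsep_O c _ _ _ _ 0 hvnear hznear ha hb (by norm_num) (by norm_num)
      · have h := FSsep_O c (β • O) (α⁻¹ • O) _ _ 0 hznear hvnear ha hb
          (by norm_num) (by norm_num)
        rw [dist_comm (β • O) (α⁻¹ • O)] at h
        linarith
      · exact FSsep_O c _ _ _ _ (-1) hvnear hznear ha hb (by norm_num) (by norm_num)
      · have h := FSsep_O c (β • O) (α⁻¹ • O) _ _ (-1) hznear hvnear ha hb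
          (by norm_num) (by norm_num)
        rw [dist_comm (β • O) (α⁻¹ • O)] at h
        linarith
    have hup : dist (α⁻¹ • O) (β • O) ≤ dist (α⁻¹ • O) O + dist O (β • O) :=
      dist_triangle _ _ _
    have hcv := dist_comm O (α⁻¹ • O)
    rw [abs_le]
    constructor <;> linarith
  · -- twisted product with the symmetric element
    have htw : twProd ξ O jx α β = α * symmElem ξ O jx β := by rw [twProd, if_neg hsep]
    have hsep' :
        ¬(((jx (α⁻¹ • O) < 1 ∨ jx (β • O) < 1) ∧ (1 < jx (α⁻¹ • O) ∨ 1 < jx (β • O))) ∨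
          ((jx (α⁻¹ • O) < -1 ∨ jx (β • O) < -1) ∧
            (-1 < jx (α⁻¹ • O) ∨ -1 < jx (β • O)))) := by
      intro hcon
      apply hsep
      rcases hcon with ⟨h1, h2⟩ | ⟨h1, h2⟩
      · exact Or.inl ⟨min_lt_iff.mpr h1, lt_max_iff.mpr h2⟩
      · exact Or.inr ⟨min_lt_iff.mpr h1, lt_max_iff.mpr h2⟩
    by_cases h0 : 0 < jx (β • O)
    · have hsymm : symmElem ξ O jx β = ξ ^ (-2 * jx (β • O) - 1) * β := by
        rw [symmElem, if_pos h0]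
      rw [htw, hsymm, hval (ξ ^ (-2 * jx (β • O) - 1) * β), mul_smul]
      have hbz := hbz1 h0
      have hcore := FScore_neg c (α⁻¹ • O) (β • O) (FSe (jx (α⁻¹ • O)))
        (FSe (jx (β • O))) (-2 * jx (β • O) - 1) hvnear hznear
        (Or.inl ⟨by omega, by omega⟩)
        (by
          by_cases h0v : 0 < jx (α⁻¹ • O)
          · have hbv := hbv1 h0v
            exact ⟨-1, by norm_num, by norm_num, Or.inr ⟨by omega, by omega⟩⟩
          · have hbv := hbv2 h0v
            have hforced : jx (α⁻¹ • O) = -1 ∧ jx (β • O) = 1 := by omega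
            exact ⟨-2, by norm_num, by norm_num, Or.inr ⟨by omega, by omega⟩⟩)
      rw [abs_le] at hcore ⊢
      have hcv := dist_comm O (α⁻¹ • O)
      constructor <;> linarith [hcore.1, hcore.2]
    · have hsymm : symmElem ξ O jx β = ξ ^ (-2 * jx (β • O) + 1) * β := by
        rw [symmElem, if_neg h0]
      rw [htw, hsymm, hval (ξ ^ (-2 * jx (β • O) + 1) * β), mul_smul]
      have hbz := hbz2 h0
      have hcore := FScore_neg c (α⁻¹ • O) (β • O) (FSe (jx (α⁻¹ • O)))
        (FSe (jx (β • O))) (-2 * jx (β • O) + 1) hvnear hznear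
        (Or.inr ⟨by omega, by omega⟩)
        (by
          by_cases h0v : 0 < jx (α⁻¹ • O)
          · have hbv := hbv1 h0v
            have hforced : jx (α⁻¹ • O) = 1 ∧ jx (β • O) = -1 := by omega
            exact ⟨1, by norm_num, by norm_num, Or.inl ⟨by omega, by omega⟩⟩
          · have hbv := hbv2 h0v
            exact ⟨0, by norm_num, by norm_num, Or.inl ⟨by omega, by omega⟩⟩)
      rw [abs_le] at hcore ⊢
      have hcv := dist_comm O (α⁻¹ • O)
      constructor <;> linarith [hcore.1, hcore.2]
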